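/- arXiv:1901.03512 — 6 statements merged into one kernel-verified Lean document; each statement's English description precedes it below -/
import Mathlib

section
/- Let p, q, s, t be integers with p ≠ q. Then the system 2p + s = 2q + t and 2p² + s² = 2q² + t² holds if and only if there exists a nonzero integer n such that q = p + 2n, s = p + 3n, and t = p − n. -/
theorem stmt_3 (p q s t : ℤ) (hpq : p ≠ q) :
    (2 * p + s = 2 * q + t ∧ 2 * p ^ 2 + s ^ 2 = 2 * q ^ 2 + t ^ 2) ↔
      ∃ n : ℤ, n ≠ 0 ∧ q = p + 2 * n ∧ s = p + 3 * n ∧ t = p - n := by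
  constructor
  · rintro ⟨h1, h2⟩
    have ht : t = s + 2*p - 2*q := by linarith
    subst ht
    have key2 : 2*((p - q)*(3*q - p - 2*s)) = 0 := by linear_combination h2
    have key : (p - q)*(3*q - p - 2*s) = 0 :=
      (mul_eq_zero.mp key2).resolve_left (by norm_num)
    rcases mul_eq_zero.mp key with h | h
    · exact absurd (by omega : p = q) hpq
    · have hpar : ∃ n : ℤ, q - p = 2*n := ⟨(q - p)/2, by omega⟩
      obtain ⟨n, hn⟩ := hpar
      exact ⟨n, by omega, by omega, by omega, by omega⟩
  · rintro ⟨n, hn, rfl, rfl, rfl⟩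
    constructor
    · ring
    · ring
end

section
/- For all j₁, j₂, j₃ ∈ {−3, 10, −6} and every integer ℓ, if 2j₁ + j₂ = 2j₃ + ℓ and 2j₁² + j₂² = 2j₃² + ℓ², then ℓ ∈ {−3, 10, −6}. -/
theorem stmt_7 (j1 j2 j3 : ℤ)
    (h1 : j1 ∈ ({-3, 10, -6} : Set ℤ)) (h2 : j2 ∈ ({-3, 10, -6} : Set ℤ))
    (h3 : j3 ∈ ({-3, 10, -6} : Set ℤ)) (l : ℤ)
    (e1 : 2 * j1 + j2 = 2 * j3 + l)
    (e2 : 2 * j1 ^ 2 + j2 ^ 2 = 2 * j3 ^ 2 + l ^ 2) :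
    l ∈ ({-3, 10, -6} : Set ℤ) := by
  simp only [Set.mem_insert_iff, Set.mem_singleton_iff] at *
  have hl : l = 2 * j1 + j2 - 2 * j3 := by linarith
  subst hl
  rcases h1 with h|h|h <;> rcases h2 with h'|h'|h' <;> rcases h3 with h''|h''|h'' <;>
    subst h <;> subst h' <;> subst h'' <;> omega
end

section
/- Let j₅, j₆, j₇ ∈ {−3, 10, −6} and let s, t be integers with s ≠ t and s, t ∉ {−3, 10, −6}. If 2j₅ + j₆ = j₇ + s + t and 2j₅² + j₆² = j₇² + s² + t², then (j₅, j₆, j₇) = (−3, 10, −6) and {s, t} = {1, 9}. -/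
theorem stmt_8 (j5 j6 j7 s t : ℤ)
    (h5 : j5 ∈ ({-3, 10, -6} : Set ℤ)) (h6 : j6 ∈ ({-3, 10, -6} : Set ℤ))
    (h7 : j7 ∈ ({-3, 10, -6} : Set ℤ))
    (hst : s ≠ t)
    (hs : s ∉ ({-3, 10, -6} : Set ℤ)) (ht : t ∉ ({-3, 10, -6} : Set ℤ))
    (e1 : 2 * j5 + j6 = j7 + s + t)
    (e2 : 2 * j5 ^ 2 + j6 ^ 2 = j7 ^ 2 + s ^ 2 + t ^ 2) :
    (j5 = -3 ∧ j6 = 10 ∧ j7 = -6) ∧ ({s, t} : Set ℤ) = {1, 9} := by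
  simp only [Set.mem_insert_iff, Set.mem_singleton_iff] at h5 h6 h7 hs ht
  push_neg at hs ht
  obtain ⟨hs1, hs2, hs3⟩ := hs
  obtain ⟨ht1, ht2, ht3⟩ := ht
  rcases h5 with rfl | rfl | rfl <;> rcases h6 with rfl | rfl | rfl <;> rcases h7 with rfl | rfl | rfl
  · -- j5=-3, j6=-3, j7=-3; S=-6, D=0
    have hsum : s + t = -6 := by linarith
    have hd : (s - t) ^ 2 = 0 := by linear_combination (-2) * e2 - (s + t + (-6)) * hsum
    exfalso
    have h0 : (s - t) * (s - t) = 0 := by linear_combination hd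
    have := mul_self_eq_zero.mp h0
    omega
  · -- j5=-3, j6=-3, j7=10; S=-19, D=-507
    have hsum : s + t = -19 := by linarith
    have hd : (s - t) ^ 2 = -507 := by linear_combination (-2) * e2 - (s + t + (-19)) * hsum
    exfalso; nlinarith [sq_nonneg (s - t)]
  · -- j5=-3, j6=-3, j7=-6; S=-3, D=-27
    have hsum : s + t = -3 := by linarith
    have hd : (s - t) ^ 2 = -27 := by linear_combination (-2) * e2 - (s + t + (-3)) * hsum
    exfalso; nlinarith [sq_nonneg (s - t)]
  · -- j5=-3, j6=10, j7=-3; S=7, D=169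
    have hsum : s + t = 7 := by linarith
    have hd : (s - t) ^ 2 = 169 := by linear_combination (-2) * e2 - (s + t + (7)) * hsum
    have h0 : (s - t - 13) * (s - t + 13) = 0 := by linear_combination hd
    exfalso; rcases mul_eq_zero.mp h0 with h | h <;> omega
  · -- j5=-3, j6=10, j7=10; S=-6, D=0
    have hsum : s + t = -6 := by linarith
    have hd : (s - t) ^ 2 = 0 := by linear_combination (-2) * e2 - (s + t + (-6)) * hsum
    exfalso
    have h0 : (s - t) * (s - t) = 0 := by linear_combination hd
    have := mul_self_eq_zero.mp h0
    omega
  · -- j5=-3, j6=10, j7=-6; S=10, D=64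
    have hsum : s + t = 10 := by linarith
    have hd : (s - t) ^ 2 = 64 := by linear_combination (-2) * e2 - (s + t + (10)) * hsum
    have h0 : (s - t - 8) * (s - t + 8) = 0 := by linear_combination hd
    rcases mul_eq_zero.mp h0 with h | h
    · obtain rfl : s = 9 := by omega
      obtain rfl : t = 1 := by omega
      exact ⟨⟨rfl, rfl, rfl⟩, Set.pair_comm 9 1⟩
    · obtain rfl : s = 1 := by omega
      obtain rfl : t = 9 := by omega
      exact ⟨⟨rfl, rfl, rfl⟩, rfl⟩
  · -- j5=-3, j6=-6, j7=-3; S=-9, D=9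
    have hsum : s + t = -9 := by linarith
    have hd : (s - t) ^ 2 = 9 := by linear_combination (-2) * e2 - (s + t + (-9)) * hsum
    have h0 : (s - t - 3) * (s - t + 3) = 0 := by linear_combination hd
    exfalso; rcases mul_eq_zero.mp h0 with h | h <;> omega
  · -- j5=-3, j6=-6, j7=10; S=-22, D=-576
    have hsum : s + t = -22 := by linarith
    have hd : (s - t) ^ 2 = -576 := by linear_combination (-2) * e2 - (s + t + (-22)) * hsum
    exfalso; nlinarith [sq_nonneg (s - t)]
  · -- j5=-3, j6=-6, j7=-6; S=-6, D=0
    have hsum : s + t = -6 := by linarith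
    have hd : (s - t) ^ 2 = 0 := by linear_combination (-2) * e2 - (s + t + (-6)) * hsum
    exfalso
    have h0 : (s - t) * (s - t) = 0 := by linear_combination hd
    have := mul_self_eq_zero.mp h0
    omega
  · -- j5=10, j6=-3, j7=-3; S=20, D=0
    have hsum : s + t = 20 := by linarith
    have hd : (s - t) ^ 2 = 0 := by linear_combination (-2) * e2 - (s + t + (20)) * hsum
    exfalso
    have h0 : (s - t) * (s - t) = 0 := by linear_combination hd
    have := mul_self_eq_zero.mp h0
    omega
  · -- j5=10, j6=-3, j7=10; S=7, D=169
    have hsum : s + t = 7 := by linarith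
    have hd : (s - t) ^ 2 = 169 := by linear_combination (-2) * e2 - (s + t + (7)) * hsum
    have h0 : (s - t - 13) * (s - t + 13) = 0 := by linear_combination hd
    exfalso; rcases mul_eq_zero.mp h0 with h | h <;> omega
  · -- j5=10, j6=-3, j7=-6; S=23, D=-183
    have hsum : s + t = 23 := by linarith
    have hd : (s - t) ^ 2 = -183 := by linear_combination (-2) * e2 - (s + t + (23)) * hsum
    exfalso; nlinarith [sq_nonneg (s - t)]
  · -- j5=10, j6=10, j7=-3; S=33, D=-507
    have hsum : s + t = 33 := by linarith
    have hd : (s - t) ^ 2 = -507 := by linear_combination (-2) * e2 - (s + t + (33)) * hsum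
    exfalso; nlinarith [sq_nonneg (s - t)]
  · -- j5=10, j6=10, j7=10; S=20, D=0
    have hsum : s + t = 20 := by linarith
    have hd : (s - t) ^ 2 = 0 := by linear_combination (-2) * e2 - (s + t + (20)) * hsum
    exfalso
    have h0 : (s - t) * (s - t) = 0 := by linear_combination hd
    have := mul_self_eq_zero.mp h0
    omega
  · -- j5=10, j6=10, j7=-6; S=36, D=-768
    have hsum : s + t = 36 := by linarith
    have hd : (s - t) ^ 2 = -768 := by linear_combination (-2) * e2 - (s + t + (36)) * hsum
    exfalso; nlinarith [sq_nonneg (s - t)]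
  · -- j5=10, j6=-6, j7=-3; S=17, D=165
    have hsum : s + t = 17 := by linarith
    have hd : (s - t) ^ 2 = 165 := by linear_combination (-2) * e2 - (s + t + (17)) * hsum
    exfalso
    have hm : ∀ x : ZMod 9, x ^ 2 ≠ 3 := by decide
    apply hm (((s : ℤ) : ZMod 9) - ((t : ℤ) : ZMod 9))
    have hc := congrArg (fun z : ℤ => (z : ZMod 9)) hd
    push_cast at hc
    exact hc.trans (by decide : ((165 : ZMod 9)) = 3)
  · -- j5=10, j6=-6, j7=10; S=4, D=256
    have hsum : s + t = 4 := by linarith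
    have hd : (s - t) ^ 2 = 256 := by linear_combination (-2) * e2 - (s + t + (4)) * hsum
    have h0 : (s - t - 16) * (s - t + 16) = 0 := by linear_combination hd
    exfalso; rcases mul_eq_zero.mp h0 with h | h <;> omega
  · -- j5=10, j6=-6, j7=-6; S=20, D=0
    have hsum : s + t = 20 := by linarith
    have hd : (s - t) ^ 2 = 0 := by linear_combination (-2) * e2 - (s + t + (20)) * hsum
    exfalso
    have h0 : (s - t) * (s - t) = 0 := by linear_combination hd
    have := mul_self_eq_zero.mp h0
    omega
  · -- j5=-6, j6=-3, j7=-3; S=-12, D=0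
    have hsum : s + t = -12 := by linarith
    have hd : (s - t) ^ 2 = 0 := by linear_combination (-2) * e2 - (s + t + (-12)) * hsum
    exfalso
    have h0 : (s - t) * (s - t) = 0 := by linear_combination hd
    have := mul_self_eq_zero.mp h0
    omega
  · -- j5=-6, j6=-3, j7=10; S=-25, D=-663
    have hsum : s + t = -25 := by linarith
    have hd : (s - t) ^ 2 = -663 := by linear_combination (-2) * e2 - (s + t + (-25)) * hsum
    exfalso; nlinarith [sq_nonneg (s - t)]
  · -- j5=-6, j6=-3, j7=-6; S=-9, D=9
    have hsum : s + t = -9 := by linarith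
    have hd : (s - t) ^ 2 = 9 := by linear_combination (-2) * e2 - (s + t + (-9)) * hsum
    have h0 : (s - t - 3) * (s - t + 3) = 0 := by linear_combination hd
    exfalso; rcases mul_eq_zero.mp h0 with h | h <;> omega
  · -- j5=-6, j6=10, j7=-3; S=1, D=325
    have hsum : s + t = 1 := by linarith
    have hd : (s - t) ^ 2 = 325 := by linear_combination (-2) * e2 - (s + t + (1)) * hsum
    exfalso
    have hm : ∀ x : ZMod 7, x ^ 2 ≠ 3 := by decide
    apply hm (((s : ℤ) : ZMod 7) - ((t : ℤ) : ZMod 7))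
    have hc := congrArg (fun z : ℤ => (z : ZMod 7)) hd
    push_cast at hc
    exact hc.trans (by decide : ((325 : ZMod 7)) = 3)
  · -- j5=-6, j6=10, j7=10; S=-12, D=0
    have hsum : s + t = -12 := by linarith
    have hd : (s - t) ^ 2 = 0 := by linear_combination (-2) * e2 - (s + t + (-12)) * hsum
    exfalso
    have h0 : (s - t) * (s - t) = 0 := by linear_combination hd
    have := mul_self_eq_zero.mp h0
    omega
  · -- j5=-6, j6=10, j7=-6; S=4, D=256
    have hsum : s + t = 4 := by linarith
    have hd : (s - t) ^ 2 = 256 := by linear_combination (-2) * e2 - (s + t + (4)) * hsum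
    have h0 : (s - t - 16) * (s - t + 16) = 0 := by linear_combination hd
    exfalso; rcases mul_eq_zero.mp h0 with h | h <;> omega
  · -- j5=-6, j6=-6, j7=-3; S=-15, D=-27
    have hsum : s + t = -15 := by linarith
    have hd : (s - t) ^ 2 = -27 := by linear_combination (-2) * e2 - (s + t + (-15)) * hsum
    exfalso; nlinarith [sq_nonneg (s - t)]
  · -- j5=-6, j6=-6, j7=10; S=-28, D=-768
    have hsum : s + t = -28 := by linarith
    have hd : (s - t) ^ 2 = -768 := by linear_combination (-2) * e2 - (s + t + (-28)) * hsum
    exfalso; nlinarith [sq_nonneg (s - t)]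
  · -- j5=-6, j6=-6, j7=-6; S=-12, D=0
    have hsum : s + t = -12 := by linarith
    have hd : (s - t) ^ 2 = 0 := by linear_combination (-2) * e2 - (s + t + (-12)) * hsum
    exfalso
    have h0 : (s - t) * (s - t) = 0 := by linear_combination hd
    have := mul_self_eq_zero.mp h0
    omega
end

section
/- For all real numbers ρ₁, ρ₂ ∈ [1, 2] and every integer k₁ with k₁ ≠ 0 and k₁ ≠ −1, one has 2(ρ₁ + ρ₂)k₁² + (5ρ₁ − ρ₂)k₁ − 3ρ₂ ≥ (2/3)√(k₁² + (k₁ + 1)²). -/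
theorem stmt_14 (ρ1 ρ2 : ℝ) (hρ1 : ρ1 ∈ Set.Icc (1 : ℝ) 2) (hρ2 : ρ2 ∈ Set.Icc (1 : ℝ) 2)
    (k1 : ℤ) (hk0 : k1 ≠ 0) (hk1 : k1 ≠ -1) :
    2 * (ρ1 + ρ2) * (k1 : ℝ) ^ 2 + (5 * ρ1 - ρ2) * (k1 : ℝ) - 3 * ρ2 ≥
      (2 / 3) * Real.sqrt ((k1 : ℝ) ^ 2 + ((k1 : ℝ) + 1) ^ 2) := by
  obtain ⟨h11, h12⟩ := hρ1
  obtain ⟨h21, h22⟩ := hρ2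
  set x : ℝ := (k1 : ℝ) with hxdef
  set s : ℝ := Real.sqrt (x ^ 2 + (x + 1) ^ 2) with hsdef
  have hs0 : 0 ≤ s := Real.sqrt_nonneg _
  have hs2 : s ^ 2 = x ^ 2 + (x + 1) ^ 2 := Real.sq_sqrt (by positivity)
  have hx : (1 : ℝ) ≤ x ∨ x ≤ -2 := by
    rcases (by omega : 1 ≤ k1 ∨ k1 ≤ -2) with h | h
    · left
      have := (@Int.cast_le ℝ _ _ _).mpr h
      push_cast at this
      simpa [hxdef] using this
    · right
      have := (@Int.cast_le ℝ _ _ _).mpr h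
      push_cast at this
      simpa [hxdef] using this
  rcases hx with h | h
  · have hsle : s ≤ 2 * x + 1 := by nlinarith [hs2, hs0]
    nlinarith [mul_nonneg (sub_nonneg.2 h11)
        (mul_nonneg (by linarith : (0:ℝ) ≤ x) (by linarith : (0:ℝ) ≤ 2*x+5)),
      mul_nonneg (sub_nonneg.2 h21)
        (mul_nonneg (by linarith : (0:ℝ) ≤ 2*x+1) (by linarith : (0:ℝ) ≤ x-1)),
      hsle, sq_nonneg (x-1), h22]
  · have hsle : s ≤ -(2 * x) - 1 := by nlinarith [hs2, hs0]
    nlinarith [mul_nonneg (sub_nonneg.2 h21) (by nlinarith : (0:ℝ) ≤ 2*x^2 - x - 3),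
      mul_nonneg (sub_nonneg.2 h11) (by nlinarith : (0:ℝ) ≤ (2*x+1)*(x+2)),
      hsle, sq_nonneg (x+2), h12]
end

section
/- Let ε = 10⁻² and ρ = (ρ₁, ρ₂, ρ₃) ∈ [2−ε, 2+ε] × [1−ε, 1+ε] × [9−ε, 9+ε]. For every (k₁, k₂, k₃) ∈ ℤ³ ∖ {0}, writing σ = k₁ + k₂ + k₃, one has 6[ρ₁(3k₂² + 3k₃² + k₁k₂ + k₁k₃ + 6σ²) + ρ₂(3k₁² + 3k₃² + k₁k₂ + k₂k₃ + 6σ²) + ρ₃(3k₁² + 3k₂² + k₁k₃ + k₂k₃ + 6σ²)] ≥ √((k₂+k₃)² + (k₁+k₃)² + (k₁+k₂)²). -/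
set_option maxHeartbeats 1000000

theorem stmt_15 (ρ1 ρ2 ρ3 : ℝ)
    (hρ1 : ρ1 ∈ Set.Icc (2 - 1/100 : ℝ) (2 + 1/100))
    (hρ2 : ρ2 ∈ Set.Icc (1 - 1/100 : ℝ) (1 + 1/100))
    (hρ3 : ρ3 ∈ Set.Icc (9 - 1/100 : ℝ) (9 + 1/100))
    (k1 k2 k3 : ℤ) (hk : (k1, k2, k3) ≠ (0, 0, 0)) :
    6 * (ρ1 * (3 * (k2 : ℝ) ^ 2 + 3 * (k3 : ℝ) ^ 2 + (k1 : ℝ) * k2 + (k1 : ℝ) * k3 +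
            6 * ((k1 : ℝ) + k2 + k3) ^ 2) +
         ρ2 * (3 * (k1 : ℝ) ^ 2 + 3 * (k3 : ℝ) ^ 2 + (k1 : ℝ) * k2 + (k2 : ℝ) * k3 +
            6 * ((k1 : ℝ) + k2 + k3) ^ 2) +
         ρ3 * (3 * (k1 : ℝ) ^ 2 + 3 * (k2 : ℝ) ^ 2 + (k1 : ℝ) * k3 + (k2 : ℝ) * k3 +
            6 * ((k1 : ℝ) + k2 + k3) ^ 2)) ≥
      Real.sqrt (((k2 : ℝ) + k3) ^ 2 + ((k1 : ℝ) + k3) ^ 2 + ((k1 : ℝ) + k2) ^ 2) := by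
  obtain ⟨h1l, h1u⟩ := hρ1
  obtain ⟨h2l, h2u⟩ := hρ2
  obtain ⟨h3l, h3u⟩ := hρ3
  have hSZ : (1 : ℤ) ≤ (k2 + k3) ^ 2 + (k1 + k3) ^ 2 + (k1 + k2) ^ 2 := by
    have hnn1 := sq_nonneg (k2+k3)
    have hnn2 := sq_nonneg (k1+k3)
    have hnn3 := sq_nonneg (k1+k2)
    rcases eq_or_ne ((k2 + k3) ^ 2 + (k1 + k3) ^ 2 + (k1 + k2) ^ 2) 0 with h | h
    · exfalso
      have h1 : k2 + k3 = 0 := by nlinarith [sq_nonneg (k2+k3), sq_nonneg (k1+k3), sq_nonneg (k1+k2), sq_nonneg (k2+k3-1), sq_nonneg (k2+k3+1)]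
      have h2 : k1 + k3 = 0 := by nlinarith [sq_nonneg (k2+k3), sq_nonneg (k1+k3), sq_nonneg (k1+k2), sq_nonneg (k1+k3-1), sq_nonneg (k1+k3+1)]
      have h3 : k1 + k2 = 0 := by nlinarith [sq_nonneg (k2+k3), sq_nonneg (k1+k3), sq_nonneg (k1+k2), sq_nonneg (k1+k2-1), sq_nonneg (k1+k2+1)]
      apply hk
      have : k1 = 0 := by omega
      have : k2 = 0 := by omega
      have : k3 = 0 := by omega
      simp_all
    · omega
  have hS1 : (1 : ℝ) ≤ ((k2 : ℝ) + k3) ^ 2 + ((k1 : ℝ) + k3) ^ 2 + ((k1 : ℝ) + k2) ^ 2 := by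
    exact_mod_cast hSZ
  set S : ℝ := ((k2 : ℝ) + k3) ^ 2 + ((k1 : ℝ) + k3) ^ 2 + ((k1 : ℝ) + k2) ^ 2 with hSdef
  have hsqrt : Real.sqrt S ≤ S := by
    calc Real.sqrt S ≤ Real.sqrt (S ^ 2) := by
          apply Real.sqrt_le_sqrt; nlinarith
      _ = S := Real.sqrt_sq (by linarith)
  have hmain : 6 * (ρ1 * (3 * (k2 : ℝ) ^ 2 + 3 * (k3 : ℝ) ^ 2 + (k1 : ℝ) * k2 + (k1 : ℝ) * k3 +
            6 * ((k1 : ℝ) + k2 + k3) ^ 2) +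
         ρ2 * (3 * (k1 : ℝ) ^ 2 + 3 * (k3 : ℝ) ^ 2 + (k1 : ℝ) * k2 + (k2 : ℝ) * k3 +
            6 * ((k1 : ℝ) + k2 + k3) ^ 2) +
         ρ3 * (3 * (k1 : ℝ) ^ 2 + 3 * (k2 : ℝ) ^ 2 + (k1 : ℝ) * k3 + (k2 : ℝ) * k3 +
            6 * ((k1 : ℝ) + k2 + k3) ^ 2)) ≥ S := by
    have hQ1 : (0:ℝ) ≤ 3 * (k2 : ℝ) ^ 2 + 3 * (k3 : ℝ) ^ 2 + (k1 : ℝ) * k2 + (k1 : ℝ) * k3 + 6 * ((k1 : ℝ) + k2 + k3) ^ 2 := by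
      nlinarith [sq_nonneg ((k1:ℝ)+k2+k3), sq_nonneg ((k2:ℝ)+k3), sq_nonneg ((k2:ℝ)-k3), sq_nonneg ((k1:ℝ)+2*k2+2*k3)]
    have hQ2 : (0:ℝ) ≤ 3 * (k1 : ℝ) ^ 2 + 3 * (k3 : ℝ) ^ 2 + (k1 : ℝ) * k2 + (k2 : ℝ) * k3 + 6 * ((k1 : ℝ) + k2 + k3) ^ 2 := by
      nlinarith [sq_nonneg ((k1:ℝ)+k2+k3), sq_nonneg ((k1:ℝ)+k3), sq_nonneg ((k1:ℝ)-k3), sq_nonneg (2*(k1:ℝ)+k2+2*k3)]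
    have hQ3 : (0:ℝ) ≤ 3 * (k1 : ℝ) ^ 2 + 3 * (k2 : ℝ) ^ 2 + (k1 : ℝ) * k3 + (k2 : ℝ) * k3 + 6 * ((k1 : ℝ) + k2 + k3) ^ 2 := by
      nlinarith [sq_nonneg ((k1:ℝ)+k2+k3), sq_nonneg ((k1:ℝ)+k2), sq_nonneg ((k1:ℝ)-k2), sq_nonneg (13*((k1:ℝ)+k2)+12*k3)]
    nlinarith [mul_nonneg (by linarith : (0:ℝ) ≤ ρ1 - (2 - 1/100)) hQ1,
      mul_nonneg (by linarith : (0:ℝ) ≤ ρ2 - (1 - 1/100)) hQ2,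
      mul_nonneg (by linarith : (0:ℝ) ≤ ρ3 - (9 - 1/100)) hQ3,
      sq_nonneg ((k1:ℝ)+k2+k3), sq_nonneg ((k1:ℝ)-k2), sq_nonneg ((k1:ℝ)-k3), sq_nonneg ((k2:ℝ)-k3)]
  linarith [hsqrt, hmain]
end

section
/- Let ε = 10⁻². For every ρ = (ρ₁, ρ₂, ρ₃) ∈ [2−ε, 2+ε] × [1−ε, 1+ε] × [9−ε, 9+ε] one has [3(2ρ₁² + ρ₂² − ρ₃² + 9ρ₁ρ₂ + 3ρ₁ρ₃)]² + 1 < 324·ρ₁²ρ₂ρ₃. -/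
theorem stmt_18 (ρ1 ρ2 ρ3 : ℝ)
    (hρ1 : ρ1 ∈ Set.Icc (2 - 1/100 : ℝ) (2 + 1/100))
    (hρ2 : ρ2 ∈ Set.Icc (1 - 1/100 : ℝ) (1 + 1/100))
    (hρ3 : ρ3 ∈ Set.Icc (9 - 1/100 : ℝ) (9 + 1/100)) :
    (3 * (2 * ρ1 ^ 2 + ρ2 ^ 2 - ρ3 ^ 2 + 9 * ρ1 * ρ2 + 3 * ρ1 * ρ3)) ^ 2 + 1 <
      324 * ρ1 ^ 2 * ρ2 * ρ3 := by
  obtain ⟨h1, h2⟩ := hρ1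
  obtain ⟨h3, h4⟩ := hρ2
  obtain ⟨h5, h6⟩ := hρ3
  have A : 2 * ρ1 ^ 2 + ρ2 ^ 2 - ρ3 ^ 2 + 9 * ρ1 * ρ2 + 3 * ρ1 * ρ3 ≤ 1 := by nlinarith [sq_nonneg (ρ1-2), sq_nonneg (ρ2-1), sq_nonneg (ρ3-9), mul_nonneg (sub_nonneg.2 h1) (sub_nonneg.2 h3), mul_nonneg (sub_nonneg.2 h1) (sub_nonneg.2 h5)]
  have B : -1 ≤ 2 * ρ1 ^ 2 + ρ2 ^ 2 - ρ3 ^ 2 + 9 * ρ1 * ρ2 + 3 * ρ1 * ρ3 := by nlinarith [sq_nonneg (ρ1-2), sq_nonneg (ρ2-1), sq_nonneg (ρ3-9), mul_nonneg (sub_nonneg.2 (le_of_lt (by linarith : (0:ℝ) < ρ1 - 0))) (sub_nonneg.2 h3)]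
  have C : 324 * ρ1 ^ 2 * ρ2 * ρ3 > 10000 := by nlinarith [mul_pos (mul_pos (mul_pos (by linarith : (0:ℝ) < ρ1) (by linarith : (0:ℝ) < ρ1)) (by linarith : (0:ℝ) < ρ2)) (by linarith : (0:ℝ) < ρ3), mul_nonneg (mul_nonneg (mul_nonneg (by linarith : (0:ℝ) ≤ ρ1 - 199/100) (by linarith : (0:ℝ) ≤ ρ1 - 199/100)) (by linarith : (0:ℝ) ≤ ρ2 - 99/100)) (by linarith : (0:ℝ) ≤ ρ3 - 899/100), mul_nonneg (mul_nonneg (by linarith : (0:ℝ) ≤ ρ1 - 199/100) (by linarith : (0:ℝ) ≤ ρ2 - 99/100)) (by linarith : (0:ℝ) ≤ ρ3 - 899/100), mul_nonneg (by linarith : (0:ℝ) ≤ ρ1 - 199/100) (by linarith : (0:ℝ) ≤ ρ2 - 99/100), mul_nonneg (by linarith : (0:ℝ) ≤ ρ2 - 99/100) (by linarith : (0:ℝ) ≤ ρ3 - 899/100), mul_nonneg (by linarith : (0:ℝ) ≤ ρ1 - 199/100) (by linarith : (0:ℝ) ≤ ρ3 - 899/100)]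
  nlinarith [A, B, C, sq_nonneg (2 * ρ1 ^ 2 + ρ2 ^ 2 - ρ3 ^ 2 + 9 * ρ1 * ρ2 + 3 * ρ1 * ρ3)]
end
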